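/- The map θ defined on basis elements of ℂH ⊗_{R₀₁} Ĝ ⊗_{R₁₂} ℂH by θ(h₁ ⊗ δ_g ⊗ h₂) = h₁⁻¹ ⊗ δ_{h₁gh₂} ⊗ h₂⁻¹ satisfies θ(θ(x)) = x and θ(xy) = θ(y)θ(x) for all x, y; hence x* := θ(x) (extended conjugate-linearly) makes ℂH ⊗_{R₀₁} Ĝ ⊗_{R₁₂} ℂH a *-algebra. -/
import Mathlib


open scoped BigOperators

noncomputable section

variable {G : Type*} [Group G] [Fintype G] [DecidableEq G]

/-- The twisting map `R₀₁ : Ĝ ⊗ ℂH → ℂH ⊗ Ĝ`, `δ_g ⊗ h ↦ h ⊗ δ_{h⁻¹g}`, on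
coefficient functions (`Ĝ ⊗ ℂH` is modelled as `G × H → ℂ`, etc.). -/
def R01 (H : Subgroup G) (a : G × H → ℂ) : H × G → ℂ :=
  fun p => a ((p.1 : G) * p.2, p.1)

/-- The twisting map `R₁₂ : ℂH ⊗ Ĝ → Ĝ ⊗ ℂH`, `h ⊗ δ_g ↦ δ_{gh⁻¹} ⊗ h`. -/
def R12 (H : Subgroup G) (a : H × G → ℂ) : G × H → ℂ :=
  fun p => a (p.2, p.1 * (p.2 : G))

/-- The multiplication of `ℂH ⊗_{R₀₁} Ĝ ⊗_{R₁₂} ℂH`. -/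
def tmul3 (H : Subgroup G) [Fintype H] (a b : H × G × H → ℂ) : H × G × H → ℂ :=
  fun p => ∑ h₂ : H, ∑ f₁ : H,
    a (p.1 * h₂⁻¹, (h₂ : G) * p.2.1, f₁) * b (h₂, p.2.1 * (f₁ : G), f₁⁻¹ * p.2.2)

/-- The map `θ(h₁ ⊗ δ_g ⊗ h₂) = h₁⁻¹ ⊗ δ_{h₁gh₂} ⊗ h₂⁻¹`, extended linearly. -/
def theta (H : Subgroup G) (a : H × G × H → ℂ) : H × G × H → ℂ :=
  fun p => a (p.1⁻¹, (p.1 : G) * p.2.1 * (p.2.2 : G), p.2.2⁻¹)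

/-- The star operation: `θ` extended conjugate-linearly. -/
def star3 (H : Subgroup G) (a : H × G × H → ℂ) : H × G × H → ℂ :=
  fun p => (starRingEnd ℂ) (a (p.1⁻¹, (p.1 : G) * p.2.1 * (p.2.2 : G), p.2.2⁻¹))

/-- `θ(h₁⊗δ_g⊗h₂) = h₁⁻¹⊗δ_{h₁gh₂}⊗h₂⁻¹` satisfies `θ∘θ = id` and
`θ(xy) = θ(y)θ(x)`; hence its conjugate-linear extension `x* = θ(x)` makes
`ℂH ⊗_{R₀₁} Ĝ ⊗_{R₁₂} ℂH` a *-algebra. -/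

lemma theta_theta_aux (H : Subgroup G) (a : H × G × H → ℂ) : theta H (theta H a) = a := by
  funext p
  simp [theta, mul_assoc]

lemma theta_mul_aux (H : Subgroup G) [Fintype H] (a b : H × G × H → ℂ) :
    theta H (tmul3 H a b) = tmul3 H (theta H b) (theta H a) := by
  funext p
  simp only [theta, tmul3]
  refine Fintype.sum_equiv (Equiv.mulRight p.1) _ _ fun h => ?_
  refine Fintype.sum_equiv (Equiv.mulLeft p.2.2) _ _ fun f => ?_
  simp only [Equiv.coe_mulRight, Equiv.coe_mulLeft]
  rw [mul_comm]
  congr 2 <;> push_cast <;> group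

lemma star3_eq (H : Subgroup G) (a : H × G × H → ℂ) :
    star3 H a = fun p => (starRingEnd ℂ) (theta H a p) := rfl

lemma conj_tmul3 (H : Subgroup G) [Fintype H] (a b : H × G × H → ℂ) :
    (fun p => (starRingEnd ℂ) (tmul3 H a b p)) =
      tmul3 H (fun p => (starRingEnd ℂ) (a p)) (fun p => (starRingEnd ℂ) (b p)) := by
  funext p
  simp [tmul3, map_sum]

theorem statement16 (H : Subgroup G) [Fintype H] :
    (∀ a : H × G × H → ℂ, theta H (theta H a) = a) ∧
    (∀ a b : H × G × H → ℂ, theta H (tmul3 H a b) = tmul3 H (theta H b) (theta H a)) ∧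
    (∀ a : H × G × H → ℂ, star3 H (star3 H a) = a) ∧
    (∀ a b : H × G × H → ℂ, star3 H (tmul3 H a b) = tmul3 H (star3 H b) (star3 H a)) ∧
    (∀ a b : H × G × H → ℂ, star3 H (a + b) = star3 H a + star3 H b) ∧
    (∀ (c : ℂ) (a : H × G × H → ℂ), star3 H (c • a) = (starRingEnd ℂ c) • star3 H a) := by
  refine ⟨theta_theta_aux H, theta_mul_aux H, ?_, ?_, ?_, ?_⟩
  · intro a
    funext p
    simp only [star3, theta]
    rw [Complex.conj_conj]
    simp [mul_assoc]
  · intro a b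
    have h1 : star3 H (tmul3 H a b) =
        fun p => (starRingEnd ℂ) (theta H (tmul3 H a b) p) := rfl
    rw [h1, theta_mul_aux]
    have h2 : (fun p => (starRingEnd ℂ) (tmul3 H (theta H b) (theta H a) p)) =
        tmul3 H (fun p => (starRingEnd ℂ) (theta H b p))
          (fun p => (starRingEnd ℂ) (theta H a p)) := conj_tmul3 H _ _
    rw [h2]
    rfl
  · intro a b
    funext p
    simp [star3]
  · intro c a
    funext p
    simp [star3, mul_comm]
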